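/- With δ_n⁺ defined by δ₀⁺(k,l) = kl and the recursion δ_n⁺(k,l) = max_{i,j} p[δ_{n-1}⁺(i,j)+δ_{n-1}⁺(k-i,l-j)] + (1/2-p)[δ_{n-1}⁺(i,l-j)+δ_{n-1}⁺(k-i,j)] (index ranges k-min(k,2^{n-1}) ≤ i ≤ min(k,2^{n-1}), l-min(l,2^{n-1}) ≤ j ≤ min(l,2^{n-1})) with p ∈ [1/4,1/2], we have δ_n⁺(k,l) ≤ min(k,l) for all n ≥ 1 and 0 ≤ k,l ≤ 2^n. -/
import Mathlib


/-- The recursively defined quantity `δ_n⁺(k,l)` from Definition 4 of the paper: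
`δ₀⁺(k,l) = kl` and
`δ_n⁺(k,l) = max_{i,j} p[δ_{n-1}⁺(i,j)+δ_{n-1}⁺(k-i,l-j)] + (1/2-p)[δ_{n-1}⁺(i,l-j)+δ_{n-1}⁺(k-i,j)]`,
the max running over `k - min(k,2^{n-1}) ≤ i ≤ min(k,2^{n-1})` and
`l - min(l,2^{n-1}) ≤ j ≤ min(l,2^{n-1})` (a nonempty range whenever `k,l ≤ 2^n`). -/
noncomputable def deltaP (p : ℝ) : ℕ → ℕ → ℕ → ℝ
  | 0, k, l => (k : ℝ) * l
  | n + 1, k, l =>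
    let s := (Finset.Icc (k - min k (2 ^ n)) (min k (2 ^ n))) ×ˢ
             (Finset.Icc (l - min l (2 ^ n)) (min l (2 ^ n)))
    if h : s.Nonempty then
      s.sup' h (fun ij =>
        p * (deltaP p n ij.1 ij.2 + deltaP p n (k - ij.1) (l - ij.2)) +
        (1 / 2 - p) * (deltaP p n ij.1 (l - ij.2) + deltaP p n (k - ij.1) ij.2))
    else 0


lemma deltaP_base (p : ℝ) (hp₁ : 1 / 4 ≤ p) (hp₂ : p ≤ 1 / 2)
    (k l : ℕ) (hk : k ≤ 2) (hl : l ≤ 2) :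
    deltaP p 1 k l ≤ (min k l : ℕ) := by
  rw [deltaP]
  have hne : ((Finset.Icc (k - min k (2 ^ 0)) (min k (2 ^ 0))) ×ˢ
             (Finset.Icc (l - min l (2 ^ 0)) (min l (2 ^ 0)))).Nonempty := by
    rw [Finset.nonempty_product]
    constructor <;> rw [Finset.nonempty_Icc] <;> omega
  rw [dif_pos hne, Finset.sup'_le_iff]
  rintro ⟨i, j⟩ hij
  simp only [Finset.mem_product, Finset.mem_Icc] at hij
  obtain ⟨⟨hi1, hi2⟩, hj1, hj2⟩ := hij
  have hi2' : i ≤ 1 := by omega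
  have hj2' : j ≤ 1 := by omega
  have hi1' : k ≤ i + 1 := by omega
  have hj1' : l ≤ j + 1 := by omega
  have hi3 : i ≤ k := by omega
  have hj3 : j ≤ l := by omega
  clear hi1 hi2 hj1 hj2
  interval_cases k <;> interval_cases l <;> interval_cases i <;> interval_cases j <;>
    simp [deltaP] <;> nlinarith

/-- `δ_n⁺(k,l) ≤ min(k,l)` for all `n ≥ 1`, `0 ≤ k,l ≤ 2^n` and
`p ∈ [1/4,1/2]`. -/
theorem deltaP_le_min (p : ℝ) (hp₁ : 1 / 4 ≤ p) (hp₂ : p ≤ 1 / 2)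
    (n k l : ℕ) (hn : 1 ≤ n) (hk : k ≤ 2 ^ n) (hl : l ≤ 2 ^ n) :
    deltaP p n k l ≤ (min k l : ℕ) := by
  induction n, hn using Nat.le_induction generalizing k l with
  | base => exact deltaP_base p hp₁ hp₂ k l hk hl
  | succ n hn ih =>
    rw [deltaP]
    have hne : ((Finset.Icc (k - min k (2 ^ n)) (min k (2 ^ n))) ×ˢ
               (Finset.Icc (l - min l (2 ^ n)) (min l (2 ^ n)))).Nonempty := by
      rw [Finset.nonempty_product]
      constructor <;> rw [Finset.nonempty_Icc] <;>
        (rw [pow_succ] at *; omega)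
    rw [dif_pos hne, Finset.sup'_le_iff]
    rintro ⟨i, j⟩ hij
    simp only [Finset.mem_product, Finset.mem_Icc] at hij
    obtain ⟨⟨hi1, hi2⟩, hj1, hj2⟩ := hij
    have h1 := ih i j (by omega) (by omega)
    have h2 := ih (k - i) (l - j) (by rw [pow_succ] at hk; omega) (by rw [pow_succ] at hl; omega)
    have h3 := ih i (l - j) (by omega) (by rw [pow_succ] at hl; omega)
    have h4 := ih (k - i) j (by rw [pow_succ] at hk; omega) (by omega)
    have e1 : min i j + min (k - i) (l - j) ≤ min k l := by omega
    have e2 : min i (l - j) + min (k - i) j ≤ min k l := by omega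
    have c1 : ((min i j : ℕ) : ℝ) + ((min (k - i) (l - j) : ℕ) : ℝ) ≤ ((min k l : ℕ) : ℝ) := by
      exact_mod_cast e1
    have c2 : ((min i (l - j) : ℕ) : ℝ) + ((min (k - i) j : ℕ) : ℝ) ≤ ((min k l : ℕ) : ℝ) := by
      exact_mod_cast e2
    have hM : (0 : ℝ) ≤ ((min k l : ℕ) : ℝ) := Nat.cast_nonneg _
    nlinarith [h1, h2, h3, h4]
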